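/- arXiv:2310.05265 — 4 statements merged into one kernel-verified Lean document; each statement's English description precedes it below -/
import Mathlib

section
/- Let δ ∈ ℂ with 0 < |δ| < 1 and r ≥ 2 a natural number, and suppose a, b, d ∈ ℂ with a ≠ 0, d ≠ 0. Define φ : ℂ² → ℂ² by φ(z,w) = (a·conj(z) + b·conj(w)^r, d·conj(w)). Then φ ∘ φ = id if and only if |a| = 1, |d| = 1, and a·conj(b) + b·conj(d)^r = 0. -/
/-- The anti-holomorphic map `φ(z,w) = (a conj z + b (conj w)^r, d conj w)` is an
involution iff `|a| = 1`, `|d| = 1` and `a conj b + b (conj d)^r = 0`. -/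
theorem stmt_4 (δ : ℂ) (hδ0 : 0 < ‖δ‖) (hδ1 : ‖δ‖ < 1)
    (r : ℕ) (hr : 2 ≤ r) (a b d : ℂ) (ha : a ≠ 0) (hd : d ≠ 0)
    (φ : ℂ × ℂ → ℂ × ℂ)
    (hφ : ∀ z w : ℂ, φ (z, w) =
      (a * (starRingEnd ℂ z) + b * (starRingEnd ℂ w) ^ r, d * (starRingEnd ℂ w))) :
    (∀ p : ℂ × ℂ, φ (φ p) = p) ↔
      (‖a‖ = 1 ∧ ‖d‖ = 1 ∧
        a * (starRingEnd ℂ b) + b * (starRingEnd ℂ d) ^ r = 0) := by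
  have key : ∀ z w : ℂ, φ (φ (z, w)) =
      (a * starRingEnd ℂ a * z + (a * starRingEnd ℂ b + b * (starRingEnd ℂ d) ^ r) * w ^ r,
        d * starRingEnd ℂ d * w) := by
    intro z w
    rw [hφ, hφ]
    simp [map_mul, map_add, map_pow, mul_pow]
    constructor <;> ring
  constructor
  · intro h
    have h1 := h (1, 0)
    have h2 := h (0, 1)
    rw [key, Prod.ext_iff] at h1 h2
    obtain ⟨ha2, -⟩ := h1
    obtain ⟨hc, hd2⟩ := h2
    rw [mul_one, zero_pow (by omega : r ≠ 0), mul_zero, add_zero] at ha2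
    rw [mul_zero, one_pow, mul_one, zero_add] at hc
    rw [mul_one] at hd2
    have habs : ‖a‖ = 1 := by
      have := congrArg norm ha2
      simp [map_mul] at this
      nlinarith [norm_nonneg a]
    have hdabs : ‖d‖ = 1 := by
      have := congrArg norm hd2
      simp [map_mul] at this
      nlinarith [norm_nonneg d]
    refine ⟨habs, hdabs, ?_⟩
    exact hc
  · rintro ⟨ha1, hd1, hc⟩ ⟨z, w⟩
    rw [key]
    have haa : a * starRingEnd ℂ a = 1 := by
      rw [Complex.mul_conj, Complex.normSq_eq_norm_sq, ha1]; simp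
    have hdd : d * starRingEnd ℂ d = 1 := by
      rw [Complex.mul_conj, Complex.normSq_eq_norm_sq, hd1]; simp
    rw [haa, hdd, hc]
    simp
end

section
/- Let δ ∈ ℂ with 0 < |δ| < 1 and r ≥ 2, and let φ(z,w) = (a·conj(z) + b·conj(w)^r, d·conj(w)) with a, d ∈ ℂ*, b ∈ ℂ, satisfying φ∘φ = id. Then there exist A, D ∈ ℂ* and B ∈ ℂ such that, with ψ(z,w) = (A·z + B·w^r, D·w), one has φ = ψ ∘ c ∘ ψ⁻¹, where c is coordinatewise conjugation. -/
lemma aux_fix (a : ℂ) (h1 : a * (starRingEnd ℂ) a = 1) :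
    ∃ A : ℂ, A ≠ 0 ∧ a * (starRingEnd ℂ) A = A := by
  by_cases h : a = -1
  · exact ⟨Complex.I, Complex.I_ne_zero, by simp [h]⟩
  · refine ⟨1 + a, fun hc => h (by linear_combination hc), ?_⟩
    simp only [map_add, map_one]
    linear_combination h1

/-- Any anti-holomorphic involution of class III type is conjugate, via a holomorphic
automorphism `ψ(z,w) = (Az + Bw^r, Dw)`, to the standard conjugation `c`; equivalently
`φ ∘ ψ = ψ ∘ c`. -/
theorem stmt_5 (δ : ℂ) (hδ0 : 0 < ‖δ‖) (hδ1 : ‖δ‖ < 1)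
    (r : ℕ) (hr : 2 ≤ r) (a b d : ℂ) (ha : a ≠ 0) (hd : d ≠ 0)
    (φ : ℂ × ℂ → ℂ × ℂ)
    (hφ : ∀ z w : ℂ, φ (z, w) =
      (a * (starRingEnd ℂ z) + b * (starRingEnd ℂ w) ^ r, d * (starRingEnd ℂ w)))
    (hinv : ∀ p : ℂ × ℂ, φ (φ p) = p) :
    ∃ (A D B : ℂ), A ≠ 0 ∧ D ≠ 0 ∧
      ∀ z w : ℂ, φ (A * z + B * w ^ r, D * w) =
        (A * (starRingEnd ℂ z) + B * (starRingEnd ℂ w) ^ r, D * (starRingEnd ℂ w)) := by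
  have hr0 : r ≠ 0 := by omega
  have e1 := hinv (1, 0)
  rw [hφ 1 0] at e1
  simp only [map_one, map_zero, zero_pow hr0, mul_zero, mul_one, add_zero] at e1
  rw [hφ a 0] at e1
  simp only [map_zero, zero_pow hr0, mul_zero, add_zero, Prod.mk.injEq] at e1
  have h1 : a * (starRingEnd ℂ) a = 1 := e1.1
  have e2 := hinv (0, 1)
  rw [hφ 0 1] at e2
  simp only [map_one, map_zero, one_pow, mul_zero, mul_one, zero_add] at e2
  rw [hφ b d] at e2
  simp only [Prod.mk.injEq] at e2
  have h2 : d * (starRingEnd ℂ) d = 1 := e2.2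
  have h3 : a * (starRingEnd ℂ) b + b * ((starRingEnd ℂ) d) ^ r = 0 := e2.1
  obtain ⟨A, hA0, hA⟩ := aux_fix a h1
  obtain ⟨D, hD0, hD⟩ := aux_fix d h2
  refine ⟨A, D, b * ((starRingEnd ℂ) D) ^ r / 2, hA0, hD0, fun z w => ?_⟩
  rw [hφ]
  have hDD : ((starRingEnd ℂ) d) ^ r * D ^ r = ((starRingEnd ℂ) D) ^ r := by
    rw [← mul_pow]
    congr 1
    calc (starRingEnd ℂ) d * D = (starRingEnd ℂ) d * (d * (starRingEnd ℂ) D) := by rw [hD]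
    _ = (d * (starRingEnd ℂ) d) * (starRingEnd ℂ) D := by ring
    _ = (starRingEnd ℂ) D := by rw [h2]; ring
  have hB : a * ((starRingEnd ℂ) b * D ^ r / 2)
      + b * ((starRingEnd ℂ) D) ^ r = b * ((starRingEnd ℂ) D) ^ r / 2 := by
    have h4 : a * (starRingEnd ℂ) b * D ^ r = - (b * ((starRingEnd ℂ) D) ^ r) := by
      linear_combination D ^ r * h3 - b * hDD
    linear_combination h4 / 2
  refine Prod.ext ?_ ?_
  · simp only [map_add, map_mul, map_pow, map_div₀, map_ofNat, Complex.conj_conj]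
    linear_combination (starRingEnd ℂ) z * hA + ((starRingEnd ℂ) w) ^ r * hB
  · simp only [map_mul]
    rw [← mul_assoc, hD]
end

section
/- Let δ ∈ (0,1), r ≥ 2, and define f(z,w) = (δ^r·z + w^r, δ·w) on ℂ². For k ∈ ℕ, k ≥ 1, define g(z,w) = (δ^{r/k}·z + (1/k)·δ^{r(1−k)/k}·w^r, δ^{1/k}·w), using the positive real k-th root δ^{1/k}. Then the k-th iterate g^k equals f. -/
open Real in
/-- The explicit k-th root `g` of the class IIₐ contraction
`f(z,w) = (δ^r z + w^r, δ w)` indeed satisfies `g^[k] = f`. -/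
theorem stmt_8 (δ : ℝ) (hδ : δ ∈ Set.Ioo (0 : ℝ) 1) (r : ℕ) (hr : 2 ≤ r)
    (k : ℕ) (hk : 1 ≤ k)
    (f g : ℂ × ℂ → ℂ × ℂ)
    (hf : ∀ z w : ℂ, f (z, w) = (((δ ^ r : ℝ) : ℂ) * z + w ^ r, (δ : ℂ) * w))
    (hg : ∀ z w : ℂ, g (z, w) =
      (((δ ^ ((r : ℝ) / (k : ℝ)) : ℝ) : ℂ) * z
          + (((1 : ℝ) / (k : ℝ) : ℝ) : ℂ)
            * ((δ ^ ((r : ℝ) * (1 - (k : ℝ)) / (k : ℝ)) : ℝ) : ℂ) * w ^ r,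
        ((δ ^ ((1 : ℝ) / (k : ℝ)) : ℝ) : ℂ) * w)) :
    g^[k] = f := by
  obtain ⟨hδ0, hδ1⟩ := hδ
  have hk0 : (k : ℝ) ≠ 0 := Nat.cast_ne_zero.mpr (by omega)
  set e : ℝ → ℂ := fun x => ((δ ^ x : ℝ) : ℂ) with he
  have hmul : ∀ x y : ℝ, e x * e y = e (x + y) := by
    intro x y
    simp only [he, ← Complex.ofReal_mul, ← Real.rpow_add hδ0]
  have hpow : ∀ (x : ℝ) (n : ℕ), (e x) ^ n = e (x * n) := by
    intro x n
    simp only [he, ← Complex.ofReal_pow, ← Real.rpow_natCast (δ ^ x) n,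
      ← Real.rpow_mul hδ0.le]
  have key : ∀ (j : ℕ) (z w : ℂ), g^[j] (z, w) =
      (e ((r : ℝ) * j / k) * z
        + (((j : ℝ) / k : ℝ) : ℂ) * e ((r : ℝ) * ((j : ℝ) - k) / k) * w ^ r,
        e ((j : ℝ) / k) * w) := by
    intro j
    induction j with
    | zero =>
      intro z w
      simp [he, Real.rpow_zero]
    | succ j ih =>
      intro z w
      rw [Function.iterate_succ_apply', ih, hg]
      have e1 : e ((r : ℝ) / k) * e ((r : ℝ) * j / k) = e ((r : ℝ) * ((j : ℝ) + 1) / k) := by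
        rw [hmul]; congr 1; ring
      have e2 : e ((r : ℝ) / k) * e ((r : ℝ) * ((j : ℝ) - k) / k)
          = e ((r : ℝ) * (((j : ℝ) + 1) - k) / k) := by
        rw [hmul]; congr 1; field_simp; ring
      have e3 : e ((r : ℝ) * (1 - (k : ℝ)) / k) * e (((j : ℝ) / k) * r)
          = e ((r : ℝ) * (((j : ℝ) + 1) - k) / k) := by
        rw [hmul]; congr 1; field_simp; ring
      have e4 : e ((1 : ℝ) / k) * e ((j : ℝ) / k) = e (((j : ℝ) + 1) / k) := by
        rw [hmul]; congr 1; field_simp; ring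
      refine Prod.ext ?_ ?_
      · show e ((r : ℝ) / k) * (e ((r : ℝ) * j / k) * z
            + (((j : ℝ) / k : ℝ) : ℂ) * e ((r : ℝ) * ((j : ℝ) - k) / k) * w ^ r)
          + (((1 : ℝ) / (k : ℝ) : ℝ) : ℂ) * e ((r : ℝ) * (1 - (k : ℝ)) / k)
            * (e ((j : ℝ) / k) * w) ^ r = _
        rw [mul_pow, hpow]
        push_cast
        linear_combination z * e1 + (((j : ℕ) : ℂ) / ((k : ℕ) : ℂ)) * w ^ r * e2
          + (1 / ((k : ℕ) : ℂ)) * w ^ r * e3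
      · show e ((1:ℝ)/k) * (e ((j:ℝ)/k) * w) = _
        push_cast
        linear_combination w * e4
  funext p
  obtain ⟨z, w⟩ := p
  rw [key k z w, hf]
  have h1 : (r : ℝ) * k / k = (r : ℕ) := by field_simp
  have h2 : (r : ℝ) * ((k : ℝ) - k) / k = 0 := by ring_nf
  have h3 : (k : ℝ) / k = 1 := by field_simp
  rw [h1, h2, h3]
  simp [he, Real.rpow_natCast, Real.rpow_zero, Real.rpow_one, div_self hk0]
end

section
/- Let δ ∈ (0,1) and r ≥ 2. For t ∈ ℝ define f^t : ℂ² → ℂ² by f^t(z,w) = (δ^{rt}·z + t·δ^{r(t−1)}·w^r, δ^t·w), where δ^s = exp(s·ln δ). Then the map t ↦ f^t is a one-parameter group: f^{s+t} = f^s ∘ f^t for all s, t ∈ ℝ, and f^1(z,w) = (δ^r z + w^r, δw). -/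
/-- The family `f^t(z,w) = (δ^{rt} z + t δ^{r(t-1)} w^r, δ^t w)` is a one-parameter
group of automorphisms with `f^1 = f`. -/
theorem stmt_9 (δ : ℝ) (hδ : δ ∈ Set.Ioo (0 : ℝ) 1) (r : ℕ) (hr : 2 ≤ r)
    (F : ℝ → ℂ × ℂ → ℂ × ℂ)
    (hF : ∀ (t : ℝ) (z w : ℂ), F t (z, w) =
      (((δ ^ ((r : ℝ) * t) : ℝ) : ℂ) * z
          + (t : ℂ) * ((δ ^ ((r : ℝ) * (t - 1)) : ℝ) : ℂ) * w ^ r,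
        ((δ ^ t : ℝ) : ℂ) * w)) :
    (∀ s t : ℝ, F (s + t) = F s ∘ F t) ∧
    (∀ z w : ℂ, F 1 (z, w) = (((δ ^ r : ℝ) : ℂ) * z + w ^ r, (δ : ℂ) * w)) := by
  obtain ⟨h0, h1⟩ := hδ
  have hmul : ∀ a b : ℝ, ((δ ^ (a + b) : ℝ) : ℂ) = ((δ ^ a : ℝ) : ℂ) * ((δ ^ b : ℝ) : ℂ) := by
    intro a b
    rw [Real.rpow_add h0, Complex.ofReal_mul]
  constructor
  · intro s t
    funext p
    obtain ⟨z, w⟩ := p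
    simp only [Function.comp_apply, hF]
    have hP : (((δ ^ t : ℝ) : ℂ)) ^ r = ((δ ^ ((r : ℝ) * t) : ℝ) : ℂ) := by
      rw [← Complex.ofReal_pow, ← Real.rpow_natCast (δ ^ t) r, ← Real.rpow_mul h0.le,
        mul_comm]
    refine Prod.ext ?_ ?_
    · show ((δ ^ ((r : ℝ) * (s + t)) : ℝ) : ℂ) * z
        + ((s + t : ℝ) : ℂ) * ((δ ^ ((r : ℝ) * (s + t - 1)) : ℝ) : ℂ) * w ^ r = _
      have e1 : (r : ℝ) * (s + t) = (r : ℝ) * s + (r : ℝ) * t := by ring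
      have e2 : (r : ℝ) * (s + t - 1) = (r : ℝ) * s + (r : ℝ) * (t - 1) := by ring
      have e3 : (r : ℝ) * (s + t - 1) = (r : ℝ) * (s - 1) + (r : ℝ) * t := by ring
      show _ = ((δ ^ ((r : ℝ) * s) : ℝ) : ℂ)
          * (((δ ^ ((r : ℝ) * t) : ℝ) : ℂ) * z
            + (t : ℂ) * ((δ ^ ((r : ℝ) * (t - 1)) : ℝ) : ℂ) * w ^ r)
        + (s : ℂ) * ((δ ^ ((r : ℝ) * (s - 1)) : ℝ) : ℂ) * (((δ ^ t : ℝ) : ℂ) * w) ^ r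
      have key : ((s + t : ℝ) : ℂ) * ((δ ^ ((r : ℝ) * (s + t - 1)) : ℝ) : ℂ)
          = (s : ℂ) * ((δ ^ ((r : ℝ) * (s - 1) + (r : ℝ) * t) : ℝ) : ℂ)
            + (t : ℂ) * ((δ ^ ((r : ℝ) * s + (r : ℝ) * (t - 1)) : ℝ) : ℂ) := by
        rw [← e2, ← e3]
        push_cast
        ring
      rw [mul_pow, hP, e1, hmul, key, hmul, hmul]
      ring
    · show ((δ ^ (s + t) : ℝ) : ℂ) * w = ((δ ^ s : ℝ) : ℂ) * (((δ ^ t : ℝ) : ℂ) * w)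
      rw [hmul]; ring
  · intro z w
    rw [hF]
    have e1 : (r : ℝ) * (1 : ℝ) = (r : ℕ) := by push_cast; ring
    have e2 : (r : ℝ) * ((1 : ℝ) - 1) = 0 := by ring
    rw [e1, e2, Real.rpow_natCast, Real.rpow_zero, Real.rpow_one]
    push_cast
    ring_nf
end
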